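/- Let X be a topological space and suppose the quotient fibration π_G : P'X/G → B(X;2) admits continuous sections over open sets U_1, …, U_k covering B(X;2). Then F(X;2) can be partitioned into pairwise disjoint G-invariant subsets V_1, …, V_k with V_i ⊆ q⁻¹(U_i), such that the endpoint fibration π' : P'X → F(X;2) admits a continuous G-equivariant section over each V_i. Consequently there is a symmetric motion planner on X with at most k + 1 domains of continuity. -/

import Mathlib

open scoped ENat

universe u v

/-- Space of paths in `X`: continuous maps from the unit interval. -/
abbrev PathSp (X : Type u) [TopologicalSpace X] := C(unitInterval, X)

/-- Reversal of a path. -/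
def pathRev {X : Type u} [TopologicalSpace X] (γ : PathSp X) : PathSp X :=
  γ.comp ⟨unitInterval.symm, unitInterval.continuous_symm⟩

/-- `P'X`: paths with distinct endpoints. -/
def PpX (X : Type u) [TopologicalSpace X] := {γ : PathSp X // γ 0 ≠ γ 1}

instance (X : Type u) [TopologicalSpace X] : TopologicalSpace (PpX X) :=
  instTopologicalSpaceSubtype

/-- Reversal involution on `P'X`. -/
def revP {X : Type u} [TopologicalSpace X] (γ : PpX X) : PpX X :=
  ⟨pathRev γ.1, by
    simp only [pathRev, ContinuousMap.comp_apply, ContinuousMap.coe_mk,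
      unitInterval.symm_zero, unitInterval.symm_one]
    exact γ.2.symm⟩

/-- `F(X;2)`: ordered configuration space of two distinct points. -/
def F2 (X : Type u) [TopologicalSpace X] := {z : X × X // z.1 ≠ z.2}

instance (X : Type u) [TopologicalSpace X] : TopologicalSpace (F2 X) :=
  instTopologicalSpaceSubtype

/-- The swap involution on `F(X;2)`. -/
def swapF {X : Type u} [TopologicalSpace X] (z : F2 X) : F2 X :=
  ⟨(z.1.2, z.1.1), z.2.symm⟩

/-- The two-endpoint map `π' : P'X → F(X;2)`. -/
def pip {X : Type u} [TopologicalSpace X] (γ : PpX X) : F2 X :=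
  ⟨(γ.1 0, γ.1 1), γ.2⟩

/-- Quotient of `P'X` by the reversal involution. -/
def PpQ (X : Type u) [TopologicalSpace X] := Quot (fun a b : PpX X => b = revP a)

/-- `B(X;2)`: unordered configuration space, quotient of `F(X;2)` by the swap. -/
def BX2 (X : Type u) [TopologicalSpace X] := Quot (fun a b : F2 X => b = swapF a)

instance (X : Type u) [TopologicalSpace X] : TopologicalSpace (PpQ X) :=
  inferInstanceAs (TopologicalSpace (Quot _))
instance (X : Type u) [TopologicalSpace X] : TopologicalSpace (BX2 X) :=
  inferInstanceAs (TopologicalSpace (Quot _))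

/-- The quotient fibration `π_G : P'X/G → B(X;2)`. -/
def piG (X : Type u) [TopologicalSpace X] : PpQ X → BX2 X :=
  Quot.map pip (by
    rintro a b rfl
    refine Subtype.ext (Prod.ext ?_ ?_) <;>
      simp [pip, revP, swapF, pathRev])

/-- `p` admits continuous local sections over an open cover of the base by `k` sets. -/
def SecCover {E : Type u} {B : Type v} [TopologicalSpace E] [TopologicalSpace B]
    (p : E → B) (k : ℕ) : Prop :=
  ∃ U : Fin k → Set B, (∀ i, IsOpen (U i)) ∧ (⋃ i, U i) = Set.univ ∧
    ∀ i, ∃ s : C(U i, E), ∀ x : U i, p (s x) = (x : B)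

/-- The Schwarz genus of a map: minimal number of open sets covering the base over each
of which the map admits a continuous section (`⊤` if there is no such finite cover). -/
noncomputable def genus {E : Type u} {B : Type v} [TopologicalSpace E] [TopologicalSpace B]
    (p : E → B) : ℕ∞ :=
  sInf {m : ℕ∞ | ∃ k : ℕ, m = (k : ℕ∞) ∧ SecCover p k}

/-- Topological complexity: the Schwarz genus of the two-endpoint path fibration. -/
noncomputable def TCx (X : Type u) [TopologicalSpace X] : ℕ∞ :=
  genus (fun γ : PathSp X => (γ 0, γ 1))

/-- Symmetric topological complexity: `1 +` the Schwarz genus of `π_G`. -/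
noncomputable def TCS (X : Type u) [TopologicalSpace X] : ℕ∞ :=
  1 + genus (piG X)

/-- The quotient map `q : F(X;2) → B(X;2)`. -/
def qF (X : Type u) [TopologicalSpace X] : F2 X → BX2 X :=
  Quot.mk (fun a b : F2 X => b = swapF a)

section Helpers

variable {X : Type u} [TopologicalSpace X]

lemma pathRev_apply (γ : PathSp X) (t : unitInterval) :
    pathRev γ t = γ (unitInterval.symm t) := rfl

lemma revP_val_apply (γ : PpX X) (t : unitInterval) :
    (revP γ).1 t = γ.1 (unitInterval.symm t) := rfl

lemma revP_revP (γ : PpX X) : revP (revP γ) = γ := by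
  apply Subtype.ext; apply ContinuousMap.ext; intro t
  simp [revP, pathRev, unitInterval.symm_symm]

lemma swapF_swapF (z : F2 X) : swapF (swapF z) = z := by
  apply Subtype.ext; rfl

lemma continuous_revP : Continuous (revP (X := X)) := by
  apply Continuous.subtype_mk
  exact (ContinuousMap.continuous_precomp _).comp continuous_subtype_val

lemma pip_revP (γ : PpX X) : pip (revP γ) = swapF (pip γ) := by
  refine Subtype.ext (Prod.ext ?_ ?_) <;>
    simp [pip, revP, swapF, pathRev]

lemma quotP_eq_iff (a b : PpX X) :
    Quot.mk (fun x y : PpX X => y = revP x) a = Quot.mk _ b ↔ b = a ∨ b = revP a := by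
  constructor
  · intro h
    have hresp : ∀ x y : PpX X, y = revP x →
        ((x = a ∨ x = revP a) = (y = a ∨ y = revP a)) := by
      rintro x y rfl
      apply propext
      constructor
      · rintro (rfl | rfl)
        · exact Or.inr rfl
        · exact Or.inl (revP_revP a)
      · rintro (h | h)
        · exact Or.inr (by rw [← h, revP_revP])
        · exact Or.inl (by
            have := congrArg revP h
            rwa [revP_revP, revP_revP] at this)
    have h2 : (a = a ∨ a = revP a) = (b = a ∨ b = revP a) :=
      congrArg (Quot.lift (fun c : PpX X => c = a ∨ c = revP a) hresp) h
    exact cast h2 (Or.inl rfl)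
  · rintro (rfl | rfl)
    · rfl
    · exact Quot.sound rfl

lemma quotF_eq_iff (a b : F2 X) : qF X a = qF X b ↔ b = a ∨ b = swapF a := by
  constructor
  · intro h
    have hresp : ∀ x y : F2 X, y = swapF x →
        ((x = a ∨ x = swapF a) = (y = a ∨ y = swapF a)) := by
      rintro x y rfl
      apply propext
      constructor
      · rintro (rfl | rfl)
        · exact Or.inr rfl
        · exact Or.inl (swapF_swapF a)
      · rintro (h | h)
        · exact Or.inr (by rw [← h, swapF_swapF])
        · exact Or.inl (by
            have := congrArg swapF h
            rwa [swapF_swapF, swapF_swapF] at this)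
    have h2 : (a = a ∨ a = swapF a) = (b = a ∨ b = swapF a) :=
      congrArg (Quot.lift (fun c : F2 X => c = a ∨ c = swapF a) hresp) h
    exact cast h2 (Or.inl rfl)
  · rintro (rfl | rfl)
    · rfl
    · exact Quot.sound rfl

lemma qF_swap (z : F2 X) : qF X (swapF z) = qF X z :=
  (Quot.sound (r := fun a b : F2 X => b = swapF a) rfl).symm

lemma isOpenMap_quotP :
    IsOpenMap (Quot.mk (fun x y : PpX X => y = revP x)) := by
  intro O hO
  have hkey : (Quot.mk (fun x y : PpX X => y = revP x)) ⁻¹'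
      ((Quot.mk (fun x y : PpX X => y = revP x)) '' O) = O ∪ revP ⁻¹' O := by
    ext γ
    constructor
    · rintro ⟨δ, hδO, hδγ⟩
      rcases (quotP_eq_iff δ γ).1 hδγ with rfl | rfl
      · exact Or.inl hδO
      · exact Or.inr (by simpa [revP_revP] using hδO)
    · rintro (h | h)
      · exact ⟨γ, h, rfl⟩
      · exact ⟨revP γ, h, (Quot.sound (r := fun x y : PpX X => y = revP x) rfl).symm⟩
  have : IsOpen ((Quot.mk (fun x y : PpX X => y = revP x)) ⁻¹'
      ((Quot.mk (fun x y : PpX X => y = revP x)) '' O)) := by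
    rw [hkey]; exact hO.union (hO.preimage continuous_revP)
  exact (isQuotientMap_quot_mk.isOpen_preimage).1 this

lemma rep_uniq {γ γ' : PpX X}
    (h : Quot.mk (fun x y : PpX X => y = revP x) γ = Quot.mk _ γ')
    (h0 : γ.1 0 = γ'.1 0) : γ = γ' := by
  rcases (quotP_eq_iff γ γ').1 h with rfl | rfl
  · rfl
  · exfalso
    apply γ.2
    have : (revP γ).1 0 = γ.1 1 := by
      simp [revP, pathRev, unitInterval.symm_zero]
    rw [this] at h0
    exact h0
  -- done

lemma piG_mk (γ : PpX X) :
    piG X (Quot.mk (fun x y : PpX X => y = revP x) γ) = qF X (pip γ) := rfl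

/-- Construction of a continuous choice of representative paths with prescribed
starting point, over a set on which a continuous section of `π_G` is given. -/
lemma exists_section [T2Space X] (V : Set (F2 X)) (c : C(V, PpQ X))
    (hc : ∀ z : V, piG X (c z) = qF X (z : F2 X)) :
    ∃ s : C(V, PpX X), (∀ z : V, pip (s z) = (z : F2 X)) ∧
      (∀ z : V, Quot.mk (fun x y : PpX X => y = revP x) (s z) = c z) := by
  classical
  set sfun : V → PpX X := fun z =>
    if ((c z).out).1 0 = (z : F2 X).1.1 then (c z).out else revP (c z).out with hsfun
  have hcases : ∀ z : V, (z : F2 X) = pip ((c z).out) ∨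
      (z : F2 X) = swapF (pip ((c z).out)) := by
    intro z
    have hmk : Quot.mk (fun x y : PpX X => y = revP x) ((c z).out) = c z := Quot.out_eq _
    have : qF X (pip ((c z).out)) = qF X (z : F2 X) := by
      rw [← piG_mk, hmk]; exact hc z
    exact (quotF_eq_iff _ _).1 this
  have hpip : ∀ z : V, pip (sfun z) = (z : F2 X) := by
    intro z
    rcases hcases z with hz | hz
    · have hcond : ((c z).out).1 0 = (z : F2 X).1.1 := by rw [hz]; rfl
      rw [hsfun]; simp only [if_pos hcond]; exact hz.symm
    · have hne : ¬ ((c z).out).1 0 = (z : F2 X).1.1 := by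
        intro h
        apply ((c z).out).2
        rw [h, hz]
        rfl
      rw [hsfun]; simp only [if_neg hne]
      rw [pip_revP, hz]
  have hmkz : ∀ z : V,
      Quot.mk (fun x y : PpX X => y = revP x) (sfun z) = c z := by
    intro z
    rw [hsfun]
    by_cases hcond : ((c z).out).1 0 = (z : F2 X).1.1
    · simp only [if_pos hcond]; exact Quot.out_eq _
    · simp only [if_neg hcond]
      exact (Quot.sound (r := fun x y : PpX X => y = revP x) rfl).symm.trans (Quot.out_eq _)
  have hstart : ∀ z : V, (sfun z).1 0 = (z : F2 X).1.1 := by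
    intro z
    have := congrArg (fun w : F2 X => w.1.1) (hpip z)
    exact this
  have hcont : Continuous sfun := by
    rw [continuous_iff_continuousAt]
    intro z₀
    rw [ContinuousAt, tendsto_nhds]
    intro M hM hM0
    obtain ⟨A1, B1, hA1, hB1, hmemA, hmemB, hdisj⟩ :=
      t2_separation ((sfun z₀).2)
    set M' : Set (PpX X) := M ∩ {γ : PpX X | γ.1 0 ∈ A1} with hM'
    have hM'open : IsOpen M' :=
      hM.inter (hA1.preimage ((continuous_eval_const (0 : unitInterval)).comp
        continuous_subtype_val))
    have hM'0 : sfun z₀ ∈ M' := ⟨hM0, hmemA⟩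
    set O : Set V := (fun z : V => c z) ⁻¹'
        ((Quot.mk (fun x y : PpX X => y = revP x)) '' M') ∩
        (fun z : V => (z : F2 X).1.2) ⁻¹' B1 with hO
    have hOopen : IsOpen O := by
      apply IsOpen.inter
      · exact (isOpenMap_quotP M' hM'open).preimage c.continuous
      · exact hB1.preimage
          (continuous_snd.comp ((continuous_subtype_val : Continuous (Subtype.val : F2 X → X × X)).comp
            (continuous_subtype_val : Continuous (Subtype.val : V → F2 X))))
    have hz₀O : z₀ ∈ O := by
      constructor
      · exact ⟨sfun z₀, hM'0, hmkz z₀⟩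
      · have : (sfun z₀).1 1 = (z₀ : F2 X).1.2 :=
          congrArg (fun w : F2 X => w.1.2) (hpip z₀)
        rw [Set.mem_preimage, ← this]
        exact hmemB
    have hsub : O ⊆ sfun ⁻¹' M := by
      rintro z ⟨⟨γ, hγM', hγeq⟩, hzB⟩
      have hqz : qF X (pip γ) = qF X (z : F2 X) := by
        rw [← piG_mk, hγeq]; exact hc z
      have hγ0 : γ.1 0 = (z : F2 X).1.1 := by
        rcases (quotF_eq_iff _ _).1 hqz with hz | hz
        · exact (congrArg (fun w : F2 X => w.1.1) hz).symm
        · exfalso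
          have h2 : (z : F2 X).1.2 = γ.1 0 :=
            congrArg (fun w : F2 X => w.1.2) hz
          have : γ.1 0 ∈ B1 := by rw [← h2]; exact hzB
          exact Set.disjoint_left.1 hdisj hγM'.2 this
      have : sfun z = γ := by
        apply rep_uniq
        · rw [hmkz z]; exact hγeq.symm
        · rw [hstart z, hγ0]
      rw [Set.mem_preimage, this]
      exact hγM'.1
    exact Filter.mem_of_superset (hOopen.mem_nhds hz₀O) hsub
  exact ⟨⟨sfun, hcont⟩, hpip, hmkz⟩

end Helpers

/-- From sections of `π_G` over an open cover `U₁,…,U_k` of `B(X;2)` one gets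
a partition of `F(X;2)` into disjoint `G`-invariant sets `V_i ⊆ q⁻¹(U_i)` carrying
continuous equivariant sections of `π'`, and consequently a symmetric motion planner on
`X` with at most `k+1` domains of continuity. -/
theorem stmt4 (X : Type u) [TopologicalSpace X] [TopologicalSpace.MetrizableSpace X]
    [PathConnectedSpace X] (k : ℕ) (U : Fin k → Set (BX2 X))
    (hopen : ∀ i, IsOpen (U i)) (hcov : (⋃ i, U i) = Set.univ)
    (hsec : ∀ i, ∃ s : C(U i, PpQ X), ∀ u : U i, piG X (s u) = (u : BX2 X)) :
    (∃ V : Fin k → Set (F2 X),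
      (Pairwise fun i j => Disjoint (V i) (V j)) ∧
      (⋃ i, V i) = Set.univ ∧
      (∀ i, V i ⊆ qF X ⁻¹' (U i)) ∧
      (∀ i, ∀ z ∈ V i, swapF z ∈ V i) ∧
      (∀ i, ∃ s : C(V i, PpX X),
        (∀ z : V i, pip (s z) = (z : F2 X)) ∧
        (∀ (z : V i) (h : swapF (z : F2 X) ∈ V i), s ⟨swapF (z : F2 X), h⟩ = revP (s z)))) ∧
    (∃ s : X × X → PathSp X,
      (∀ A B : X, (s (A, B)) 0 = A ∧ (s (A, B)) 1 = B) ∧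
      (∀ (A : X) (t : unitInterval), (s (A, A)) t = A) ∧
      (∀ (A B : X) (t : unitInterval), (s (B, A)) t = (s (A, B)) (unitInterval.symm t)) ∧
      ∃ W : Fin (k + 1) → Set (X × X),
        (⋃ j, W j) = Set.univ ∧
        (Pairwise fun i j => Disjoint (W i) (W j)) ∧
        ∀ j, ContinuousOn s (W j)) := by
  classical
  -- The partition of F(X;2)
  set V : Fin k → Set (F2 X) := fun i =>
    {z | qF X z ∈ U i ∧ ∀ j < i, qF X z ∉ U j} with hV
  have hVsub : ∀ i, V i ⊆ qF X ⁻¹' (U i) := fun i z hz => hz.1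
  have hVdisj : Pairwise fun i j => Disjoint (V i) (V j) := by
    intro i j hij
    rw [Set.disjoint_left]
    intro z hzi hzj
    rcases lt_or_gt_of_ne hij with h | h
    · exact hzj.2 i h hzi.1
    · exact hzi.2 j h hzj.1
  have hVuniv : (⋃ i, V i) = Set.univ := by
    apply Set.eq_univ_of_forall
    intro z
    have : qF X z ∈ ⋃ i, U i := by rw [hcov]; trivial
    obtain ⟨i0, hi0⟩ := Set.mem_iUnion.1 this
    obtain ⟨i, hi, hmin⟩ := wellFounded_lt.has_min {i : Fin k | qF X z ∈ U i} ⟨i0, hi0⟩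
    exact Set.mem_iUnion.2 ⟨i, hi, fun j hj hPj => hmin j hPj hj⟩
  have hVswap : ∀ i, ∀ z ∈ V i, swapF z ∈ V i := by
    intro i z hz
    refine ⟨?_, ?_⟩
    · rw [qF_swap]; exact hz.1
    · intro j hj
      rw [qF_swap]; exact hz.2 j hj
  -- The sections over the V i
  have hsecV : ∀ i, ∃ s : C(V i, PpX X),
      (∀ z : V i, pip (s z) = (z : F2 X)) ∧
      (∀ (z : V i) (h : swapF (z : F2 X) ∈ V i),
        s ⟨swapF (z : F2 X), h⟩ = revP (s z)) := by
    intro i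
    obtain ⟨σ, hσ⟩ := hsec i
    set c : C(V i, PpQ X) :=
      ⟨fun z => σ ⟨qF X (z : F2 X), (hVsub i) z.2⟩, by
        apply σ.continuous.comp
        apply Continuous.subtype_mk
        exact (continuous_quot_mk).comp continuous_subtype_val⟩ with hcdef
    have hc : ∀ z : V i, piG X (c z) = qF X (z : F2 X) := fun z => hσ _
    obtain ⟨s, hs1, hs2⟩ := exists_section (V i) c hc
    refine ⟨s, hs1, ?_⟩
    intro z h
    have hceq : c ⟨swapF (z : F2 X), h⟩ = c z := by
      rw [hcdef]
      simp only [ContinuousMap.coe_mk]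
      congr 1
      exact Subtype.ext (qF_swap (z : F2 X))
    apply rep_uniq
    · rw [hs2 ⟨swapF (z : F2 X), h⟩, hceq, ← hs2 z]
      exact Quot.sound (r := fun x y : PpX X => y = revP x) rfl
    · have h1 : (s ⟨swapF (z : F2 X), h⟩).1 0 = (swapF (z : F2 X)).1.1 :=
        congrArg (fun w : F2 X => w.1.1) (hs1 ⟨swapF (z : F2 X), h⟩)
      have h2 : (s z).1 1 = (z : F2 X).1.2 :=
        congrArg (fun w : F2 X => w.1.2) (hs1 z)
      rw [h1]
      show (z : F2 X).1.2 = (revP (s z)).1 0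
      rw [revP_val_apply, unitInterval.symm_zero, h2]
  choose S hS1 hS2 using hsecV
  constructor
  · exact ⟨V, hVdisj, hVuniv, hVsub, hVswap, fun i => ⟨S i, hS1 i, hS2 i⟩⟩
  -- The symmetric motion planner
  have hcoverEx : ∀ z : F2 X, ∃ i, z ∈ V i := by
    intro z
    have : z ∈ ⋃ i, V i := by rw [hVuniv]; trivial
    exact Set.mem_iUnion.1 this
  set idx : F2 X → Fin k := fun z => (hcoverEx z).choose with hidxdef
  have hidx : ∀ z : F2 X, z ∈ V (idx z) := fun z => (hcoverEx z).choose_spec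
  have huniq : ∀ (z : F2 X) (i : Fin k), z ∈ V i → i = idx z := by
    intro z i hi
    by_contra hne
    exact Set.disjoint_left.1 (hVdisj hne) hi (hidx z)
  set sF : F2 X → PpX X := fun z => S (idx z) ⟨z, hidx z⟩ with hsFdef
  have sF_eq : ∀ (z : F2 X) (i : Fin k) (h : z ∈ V i),
      sF z = S i ⟨z, h⟩ := by
    intro z i h
    have e : i = idx z := huniq z i h
    subst e
    rfl
  have sF_pip : ∀ z : F2 X, pip (sF z) = z := fun z => hS1 (idx z) ⟨z, hidx z⟩
  have sF_swap : ∀ z : F2 X, sF (swapF z) = revP (sF z) := by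
    intro z
    have hmem : swapF z ∈ V (idx z) := hVswap (idx z) z (hidx z)
    rw [sF_eq (swapF z) (idx z) hmem]
    rw [hS2 (idx z) ⟨z, hidx z⟩ hmem]
  set planner : X × X → PathSp X := fun p =>
    if h : p.1 = p.2 then ContinuousMap.const unitInterval p.1
    else (sF ⟨p, h⟩).1 with hplanner
  refine ⟨planner, ?_, ?_, ?_, ?_⟩
  · -- endpoints
    intro A B
    by_cases h : A = B
    · subst h
      rw [hplanner]
      simp only [dif_pos rfl]
      exact ⟨rfl, rfl⟩
    · rw [hplanner]
      simp only [dif_neg h]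
      have := sF_pip ⟨(A, B), h⟩
      exact ⟨congrArg (fun w : F2 X => w.1.1) this,
        congrArg (fun w : F2 X => w.1.2) this⟩
  · -- diagonal
    intro A t
    rw [hplanner]
    simp only [dif_pos rfl]
    rfl
  · -- symmetry
    intro A B t
    by_cases h : A = B
    · subst h
      rw [hplanner]
      simp only [dif_pos rfl]
      rfl
    · rw [hplanner]
      simp only [dif_neg h, dif_neg (Ne.symm h)]
      have hswap : (⟨(B, A), Ne.symm h⟩ : F2 X) = swapF ⟨(A, B), h⟩ :=
        Subtype.ext rfl
      exact congrArg (fun γ : PpX X => γ.1 t) ((congrArg sF hswap).trans (sF_swap _))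
  · -- the domains of continuity
    set W : Fin (k + 1) → Set (X × X) := fun j =>
      if h : j = 0 then {p : X × X | p.1 = p.2}
      else {p : X × X | ∃ hne : p.1 ≠ p.2, (⟨p, hne⟩ : F2 X) ∈ V (j.pred h)}
      with hW
    refine ⟨W, ?_, ?_, ?_⟩
    · -- cover
      apply Set.eq_univ_of_forall
      intro p
      by_cases h : p.1 = p.2
      · exact Set.mem_iUnion.2 ⟨0, by rw [hW]; simp only [dif_pos rfl]; exact h⟩
      · refine Set.mem_iUnion.2 ⟨(idx ⟨p, h⟩).succ, ?_⟩
        rw [hW]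
        simp only [dif_neg (Fin.succ_ne_zero (idx ⟨p, h⟩))]
        refine ⟨h, ?_⟩
        rw [Fin.pred_succ]
        exact hidx ⟨p, h⟩
    · -- disjoint
      intro i j hij
      rw [Set.disjoint_left]
      intro p hpi hpj
      by_cases hi : i = 0
      · subst hi
        have hj : j ≠ 0 := fun hj => hij (by rw [hj])
        rw [hW] at hpi hpj
        simp only [dif_pos rfl] at hpi
        simp only [dif_neg hj] at hpj
        exact hpj.1 hpi
      · by_cases hj : j = 0
        · subst hj
          rw [hW] at hpi hpj
          simp only [dif_pos rfl] at hpj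
          simp only [dif_neg hi] at hpi
          exact hpi.1 hpj
        · rw [hW] at hpi hpj
          simp only [dif_neg hi] at hpi
          simp only [dif_neg hj] at hpj
          obtain ⟨hne, hmi⟩ := hpi
          obtain ⟨hne', hmj⟩ := hpj
          have hmj' : (⟨p, hne⟩ : F2 X) ∈ V (j.pred hj) := hmj
          have h1 : i.pred hi = idx ⟨p, hne⟩ := huniq _ _ hmi
          have h2 : j.pred hj = idx ⟨p, hne⟩ := huniq _ _ hmj'
          apply hij
          have : i.pred hi = j.pred hj := by rw [h1, h2]
          rwa [Fin.pred_inj] at this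
    · -- continuity
      intro j
      by_cases hj : j = 0
      · subst hj
        have hWj : W 0 = {p : X × X | p.1 = p.2} := by rw [hW]; simp
        rw [hWj]
        apply ContinuousOn.congr
          (f := fun p : X × X => ContinuousMap.const unitInterval p.1)
        · exact (ContinuousMap.continuous_const'.comp continuous_fst).continuousOn
        · intro p hp
          exact dif_pos hp
      · set i := j.pred hj with hi
        have hWj : W j = {p : X × X | ∃ hne : p.1 ≠ p.2,
            (⟨p, hne⟩ : F2 X) ∈ V i} := by rw [hW]; simp only [dif_neg hj]; rfl
        rw [hWj, continuousOn_iff_continuous_restrict]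
        have hchoice : ∀ w : {p : X × X | ∃ hne : p.1 ≠ p.2, (⟨p, hne⟩ : F2 X) ∈ V i},
            ∃ hne : (w : X × X).1 ≠ (w : X × X).2,
              (⟨(w : X × X), hne⟩ : F2 X) ∈ V i := fun w => w.2
        have he : Continuous (fun w : {p : X × X | ∃ hne : p.1 ≠ p.2,
            (⟨p, hne⟩ : F2 X) ∈ V i} =>
            (⟨⟨(w : X × X), (hchoice w).choose⟩, (hchoice w).choose_spec⟩ : V i)) := by
          apply Continuous.subtype_mk
          apply Continuous.subtype_mk
          exact continuous_subtype_val
        apply Continuous.congr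
          (f := fun w : {p : X × X | ∃ hne : p.1 ≠ p.2, (⟨p, hne⟩ : F2 X) ∈ V i} =>
            (S i (⟨⟨(w : X × X), (hchoice w).choose⟩, (hchoice w).choose_spec⟩ : V i)).1)
        · exact continuous_subtype_val.comp ((S i).continuous.comp he)
        · intro w
          show _ = planner (w : X × X)
          have h1 : planner (w : X × X) = (sF ⟨(w : X × X), (hchoice w).choose⟩).1 :=
            dif_neg (hchoice w).choose
          rw [h1, sF_eq ⟨(w : X × X), (hchoice w).choose⟩ i (hchoice w).choose_spec]
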